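/- Let γ > 0 be a real number, let α, β be positive integers, and let s be a complex number with Re s > 2. Then ∑_{m,n≥0} (γ + αm + βn)^{−s} = ∑_{j=0}^{β−1} ∑_{k=0}^{α−1} ∑_{ν≥0} (ν+1)·(γ + αβν + αj + βk)^{−s}, where all sums converge absolutely. -/

import Mathlib

open Complex Finset

lemma core_summable (c d r : ℝ) (hc : 0 < c) (hd : 0 < d) (hr : 2 < r) :
    Summable (fun ν : ℕ => ((ν : ℝ) + 1) * (c + d * ν) ^ (-r)) := by
  have hmin : 0 < min c d := lt_min hc hd
  have hsum : Summable (fun ν : ℕ => (min c d) ^ (-r) * ((ν : ℝ) + 1) ^ (1 - r)) := by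
    apply Summable.mul_left
    have h0 : Summable (fun n : ℕ => (n : ℝ) ^ (1 - r)) :=
      Real.summable_nat_rpow.2 (by linarith)
    have := (summable_nat_add_iff 1).2 h0
    simpa using this
  refine hsum.of_nonneg_of_le (fun ν => ?_) (fun ν => ?_)
  · positivity
  · have hb : (0:ℝ) < min c d * ((ν : ℝ) + 1) := by positivity
    have hle : min c d * ((ν : ℝ) + 1) ≤ c + d * ν := by
      have h1 : min c d ≤ c := min_le_left _ _
      have h2 : min c d * ν ≤ d * ν :=
        mul_le_mul_of_nonneg_right (min_le_right _ _) (by positivity)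
      nlinarith
    have h3 : (c + d * ν) ^ (-r) ≤ (min c d * ((ν : ℝ) + 1)) ^ (-r) :=
      Real.rpow_le_rpow_of_nonpos hb hle (by linarith)
    have h4 : (min c d * ((ν : ℝ) + 1)) ^ (-r) =
        (min c d) ^ (-r) * ((ν : ℝ) + 1) ^ (-r) :=
      Real.mul_rpow hmin.le (by positivity)
    have h5 : ((ν : ℝ) + 1) * ((ν : ℝ) + 1) ^ (-r) = ((ν : ℝ) + 1) ^ (1 - r) := by
      rw [sub_eq_add_neg, Real.rpow_add (by positivity), Real.rpow_one]
    calc ((ν : ℝ) + 1) * (c + d * ν) ^ (-r)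
        ≤ ((ν : ℝ) + 1) * ((min c d) ^ (-r) * ((ν : ℝ) + 1) ^ (-r)) := by
          rw [← h4]; exact mul_le_mul_of_nonneg_left h3 (by positivity)
      _ = (min c d) ^ (-r) * (((ν : ℝ) + 1) * ((ν : ℝ) + 1) ^ (-r)) := by ring
      _ = (min c d) ^ (-r) * ((ν : ℝ) + 1) ^ (1 - r) := by rw [h5]

/-- Summability over the antidiagonal-sigma decomposition: for positive `c, d` and `r > 2`,
the function `(N, M) ↦ (c + d (N + M))^(-r)` is summable over `ℕ × ℕ`. -/
lemma slice_summable (c d r : ℝ) (hc : 0 < c) (hd : 0 < d) (hr : 2 < r) :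
    Summable (fun NM : ℕ × ℕ => (c + d * (NM.1 + NM.2)) ^ (-r)) := by
  rw [← Finset.HasAntidiagonal.sigmaAntidiagonalEquivProd.summable_iff]
  have key : ∀ x : (Σ ν : ℕ, Finset.HasAntidiagonal.antidiagonal ν),
      (fun NM : ℕ × ℕ => (c + d * (NM.1 + NM.2)) ^ (-r))
        (Finset.HasAntidiagonal.sigmaAntidiagonalEquivProd x) = (c + d * x.1) ^ (-r) := by
    rintro ⟨ν, ⟨N, M⟩, h⟩
    rw [Finset.HasAntidiagonal.mem_antidiagonal] at h
    simp [Finset.HasAntidiagonal.sigmaAntidiagonalEquivProd, ← h]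
  refine Summable.congr ?_ (fun x => (key x).symm)
  refine (summable_sigma_of_nonneg (fun x => by positivity)).2 ⟨fun ν => ?_, ?_⟩
  · exact Summable.of_finite
  · apply Summable.congr (core_summable c d r hc hd hr)
    intro ν
    rw [tsum_fintype]
    simp only [Finset.sum_const, Finset.card_univ, Fintype.card_coe,
      Finset.Nat.card_antidiagonal, nsmul_eq_mul]
    push_cast
    ring

def resEquiv (α β : ℕ) [NeZero α] [NeZero β] : (Fin β × Fin α) × (ℕ × ℕ) ≃ ℕ × ℕ :=
  (Equiv.prodComm _ _).trans <|
    (Equiv.prodProdProdComm ℕ ℕ (Fin β) (Fin α)).trans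
      ((Nat.divModEquiv β).prodCongr (Nat.divModEquiv α)).symm

lemma resEquiv_apply (α β : ℕ) [NeZero α] [NeZero β] (j : Fin β) (k : Fin α) (N M : ℕ) :
    resEquiv α β ((j, k), (N, M)) = (N * β + j, M * α + k) := rfl

theorem barnes_residue_class_decomposition (γ : ℝ) (hγ : 0 < γ) (α β : ℕ)
    (hα : 0 < α) (hβ : 0 < β) (s : ℂ) (hs : 2 < s.re) :
    (Summable fun mn : ℕ × ℕ =>
        ‖((γ : ℂ) + α * mn.1 + β * mn.2) ^ (-s)‖) ∧
    (∀ j ∈ Finset.range β, ∀ k ∈ Finset.range α,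
        Summable fun ν : ℕ =>
          ‖((ν : ℂ) + 1) * ((γ : ℂ) + α * β * ν + α * j + β * k) ^ (-s)‖) ∧
    ∑' mn : ℕ × ℕ, ((γ : ℂ) + α * mn.1 + β * mn.2) ^ (-s) =
      ∑ j ∈ Finset.range β, ∑ k ∈ Finset.range α,
        ∑' ν : ℕ, ((ν : ℂ) + 1) * ((γ : ℂ) + α * β * ν + α * j + β * k) ^ (-s) := by
  haveI : NeZero α := ⟨hα.ne'⟩
  haveI : NeZero β := ⟨hβ.ne'⟩
  set r := s.re with hr_def
  -- norm of cpow of positive real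
  have hnorm : ∀ x : ℝ, 0 < x → ‖(x : ℂ) ^ (-s)‖ = x ^ (-r) := by
    intro x hx
    rw [Complex.norm_cpow_eq_rpow_re_of_pos hx, Complex.neg_re]
  have hposmn : ∀ m n : ℕ, (0:ℝ) < γ + α * m + β * n := fun m n => by positivity
  have hcast : ∀ m n : ℕ, ((γ : ℂ) + α * m + β * n) = ((γ + α * m + β * n : ℝ) : ℂ) := by
    intro m n; push_cast; ring
  -- claim 1 : master summability of norms
  have claim1 : Summable fun mn : ℕ × ℕ => ‖((γ : ℂ) + α * mn.1 + β * mn.2) ^ (-s)‖ := by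
    have hF : Summable fun mn : ℕ × ℕ => ((γ + α * mn.1 + β * mn.2 : ℝ)) ^ (-r) := by
      rw [← (resEquiv α β).summable_iff]
      have key : ∀ x : (Fin β × Fin α) × (ℕ × ℕ),
          (fun mn : ℕ × ℕ => ((γ + α * mn.1 + β * mn.2 : ℝ)) ^ (-r)) (resEquiv α β x) =
            ((γ + α * x.1.1 + β * x.1.2 : ℝ) + (α * β : ℝ) * (x.2.1 + x.2.2)) ^ (-r) := by
        rintro ⟨⟨j, k⟩, N, M⟩
        rw [resEquiv_apply]
        push_cast
        ring_nf
      have hG : Summable (fun x : (Fin β × Fin α) × (ℕ × ℕ) =>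
          ((γ + α * x.1.1 + β * x.1.2 : ℝ) + (α * β : ℝ) * (x.2.1 + x.2.2)) ^ (-r)) := by
        refine (summable_prod_of_nonneg ?_).2 ⟨fun jk => ?_, Summable.of_finite⟩
        · intro x
          positivity
        · have hc : (0:ℝ) < γ + α * jk.1 + β * jk.2 := by positivity
          have hd : (0:ℝ) < (α * β : ℝ) := by positivity
          exact slice_summable (γ + α * jk.1 + β * jk.2) ((α : ℝ) * β) r hc hd hs
      exact hG.congr (fun x => (key x).symm)
    apply Summable.congr hF
    intro mn
    rw [hcast mn.1 mn.2, hnorm _ (hposmn mn.1 mn.2)]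
  refine ⟨claim1, ?_, ?_⟩
  -- claim 2
  · intro j hj k hk
    have hc : (0:ℝ) < γ + α * j + β * k := by positivity
    have hd : (0:ℝ) < (α : ℝ) * β := by positivity
    have hbase : ∀ ν : ℕ, (γ + α * j + β * k) + (α : ℝ) * β * ν
        = γ + α * β * ν + α * j + β * k := fun ν => by ring
    apply Summable.congr (core_summable (γ + α * j + β * k) ((α : ℝ) * β) r hc hd hs)
    intro ν
    have hb : (0:ℝ) < γ + α * β * ν + α * j + β * k := by positivity
    have h1 : ((γ : ℂ) + α * β * ν + α * j + β * k) =
        ((γ + α * β * ν + α * j + β * k : ℝ) : ℂ) := by push_cast; ring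
    have h2 : ((ν : ℂ) + 1) = ((ν + 1 : ℝ) : ℂ) := by norm_cast
    rw [norm_mul, h1, h2, hnorm _ hb, Complex.norm_real,
      Real.norm_of_nonneg (by positivity), hbase ν]
  -- claim 3 : the tsum identity
  · set f : ℕ × ℕ → ℂ := fun mn => ((γ : ℂ) + α * mn.1 + β * mn.2) ^ (-s) with hf_def
    have hfs : Summable f := claim1.of_norm
    clear_value f
    have hfE : Summable (fun x : (Fin β × Fin α) × (ℕ × ℕ) => f (resEquiv α β x)) :=
      (resEquiv α β).summable_iff.2 hfs
    have inner : ∀ (j : Fin β) (k : Fin α),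
        ∑' NM : ℕ × ℕ, f (resEquiv α β ((j, k), NM)) =
          ∑' ν : ℕ, ((ν : ℂ) + 1) *
            ((γ : ℂ) + α * β * ν + α * (j : ℕ) + β * (k : ℕ)) ^ (-s) := by
      intro j k
      set g : ℕ → ℂ := fun ν =>
        ((γ : ℂ) + α * β * ν + α * (j : ℕ) + β * (k : ℕ)) ^ (-s) with hg_def
      have hfg : ∀ NM : ℕ × ℕ, f (resEquiv α β ((j, k), NM)) = g (NM.1 + NM.2) := by
        rintro ⟨N, M⟩
        rw [resEquiv_apply]
        simp only [hf_def, hg_def]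
        congr 1
        push_cast
        ring
      have hslice : Summable (fun NM : ℕ × ℕ => g (NM.1 + NM.2)) :=
        (hfE.prod_factor (j, k)).congr hfg
      have hsig : Summable (fun x : (Σ ν : ℕ, Finset.HasAntidiagonal.antidiagonal ν) => g x.1) := by
        apply (Finset.HasAntidiagonal.sigmaAntidiagonalEquivProd.summable_iff.2 hslice).congr
        rintro ⟨ν, ⟨N, M⟩, h⟩
        rw [Finset.HasAntidiagonal.mem_antidiagonal] at h
        simp [Finset.HasAntidiagonal.sigmaAntidiagonalEquivProd, ← h]
      calc ∑' NM : ℕ × ℕ, f (resEquiv α β ((j, k), NM))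
          = ∑' NM : ℕ × ℕ, g (NM.1 + NM.2) := tsum_congr hfg
        _ = ∑' x : (Σ ν : ℕ, Finset.HasAntidiagonal.antidiagonal ν),
              (fun NM : ℕ × ℕ => g (NM.1 + NM.2)) (Finset.HasAntidiagonal.sigmaAntidiagonalEquivProd x) :=
            (Finset.HasAntidiagonal.sigmaAntidiagonalEquivProd.tsum_eq
              (fun NM : ℕ × ℕ => g (NM.1 + NM.2))).symm
        _ = ∑' x : (Σ ν : ℕ, Finset.HasAntidiagonal.antidiagonal ν), g x.1 := by
            apply tsum_congr
            rintro ⟨ν, ⟨N, M⟩, h⟩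
            rw [Finset.HasAntidiagonal.mem_antidiagonal] at h
            simp [Finset.HasAntidiagonal.sigmaAntidiagonalEquivProd, ← h]
        _ = ∑' ν : ℕ, ∑' _ : Finset.HasAntidiagonal.antidiagonal ν, g ν :=
            Summable.tsum_sigma' (fun ν => Summable.of_finite) hsig
        _ = ∑' ν : ℕ, ((ν : ℂ) + 1) * g ν := by
            apply tsum_congr
            intro ν
            rw [tsum_fintype]
            simp only [Finset.sum_const, Finset.card_univ, Fintype.card_coe,
              Finset.Nat.card_antidiagonal, nsmul_eq_mul]
            push_cast
            ring
    calc ∑' mn : ℕ × ℕ, f mn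
        = ∑' x : (Fin β × Fin α) × (ℕ × ℕ), f (resEquiv α β x) :=
          ((resEquiv α β).tsum_eq f).symm
      _ = ∑' jk : Fin β × Fin α, ∑' NM : ℕ × ℕ, f (resEquiv α β (jk, NM)) :=
          Summable.tsum_prod' hfE (fun jk => hfE.prod_factor jk)
      _ = ∑ jk : Fin β × Fin α, ∑' NM : ℕ × ℕ, f (resEquiv α β (jk, NM)) := tsum_fintype _
      _ = ∑ j : Fin β, ∑ k : Fin α, ∑' NM : ℕ × ℕ, f (resEquiv α β ((j, k), NM)) :=
          Fintype.sum_prod_type _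
      _ = ∑ j : Fin β, ∑ k : Fin α, ∑' ν : ℕ, ((ν : ℂ) + 1) *
            ((γ : ℂ) + α * β * ν + α * (j : ℕ) + β * (k : ℕ)) ^ (-s) :=
          Finset.sum_congr rfl fun j _ => Finset.sum_congr rfl fun k _ => inner j k
      _ = ∑ j ∈ Finset.range β, ∑ k ∈ Finset.range α,
            ∑' ν : ℕ, ((ν : ℂ) + 1) * ((γ : ℂ) + α * β * ν + α * j + β * k) ^ (-s) := by
          rw [← Fin.sum_univ_eq_sum_range
            (fun j => ∑ k ∈ Finset.range α,
              ∑' ν : ℕ, ((ν : ℂ) + 1) * ((γ : ℂ) + α * β * ν + α * j + β * k) ^ (-s)) β]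
          refine Finset.sum_congr rfl fun j _ => ?_
          rw [← Fin.sum_univ_eq_sum_range
            (fun k => ∑' ν : ℕ, ((ν : ℂ) + 1) *
              ((γ : ℂ) + α * β * ν + α * (j : ℕ) + β * k) ^ (-s)) α]
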